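/- Let M be a compact manifold with continuous flow φ and α ∈ H¹(M,ℤ) \ {0}. If there exists an α-equivariant pre-Lyapunov map f : M̂_α → ℝ, then α is quasi-Lyapunov. -/

import Mathlib

/-- Combinatorial data of a pseudo-orbit: points `x i` and flow durations `t i`;
the pseudo-orbit follows the flow from `x i` for time `t i` and then jumps to `x (i+1)`. -/
structure PreChain (M : Type*) where
  n : ℕ
  x : Fin (n + 1) → M
  t : Fin (n + 1) → ℝ

namespace PreChain

variable {M : Type*} [MetricSpace M]

/-- `γ` is an `(ε,T)`-pseudo-orbit for the flow `φ`: each flow segment lasts at least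
`T` and each jump has size `< ε`. -/
def IsChain (φ : Flow ℝ M) (T ε : ℝ) (γ : PreChain M) : Prop :=
  (∀ i, T ≤ γ.t i) ∧
  ∀ i : Fin γ.n, dist (φ (γ.t i.castSucc) (γ.x i.castSucc)) (γ.x i.succ) < ε

/-- The starting point of a pseudo-orbit. -/
def first (γ : PreChain M) : M := γ.x 0

/-- The final point of a pseudo-orbit (the endpoint of the last flow segment). -/
def lastPoint (φ : Flow ℝ M) (γ : PreChain M) : M :=
  φ (γ.t (Fin.last γ.n)) (γ.x (Fin.last γ.n))

/-- A periodic `(ε,T)`-pseudo-orbit: the final jump back to the start has size `< ε`. -/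
def IsPeriodic (φ : Flow ℝ M) (T ε : ℝ) (γ : PreChain M) : Prop :=
  γ.IsChain φ T ε ∧ dist (γ.lastPoint φ) γ.first < ε

/-- The total length (duration) of a pseudo-orbit. -/
def len (γ : PreChain M) : ℝ := ∑ i, γ.t i

/-- The pseudo-orbit passes through the point `p`. -/
def Through (γ : PreChain M) (p : M) : Prop := ∃ i, γ.x i = p

end PreChain

/-- Chain reachability `a ⇝ b`: for every `ε > 0` there is an `(ε,T)`-pseudo-orbit
from `a` to `b`. -/
def ChainTo {M : Type*} [MetricSpace M] (φ : Flow ℝ M) (T : ℝ) (a b : M) : Prop :=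
  ∀ ε > 0, ∃ γ : PreChain M, γ.IsChain φ T ε ∧ γ.first = a ∧ γ.lastPoint φ = b

/-- The chain-recurrent set of the flow `φ`. -/
def ChainRec {M : Type*} [MetricSpace M] (φ : Flow ℝ M) (T : ℝ) : Set M :=
  {x | ChainTo φ T x x}

section QLAux

open Set Filter Topology

/-- Uniform (tube) continuity of the flow over a compact time interval, at a fixed point. -/
theorem QL.tube {Mh : Type*} [MetricSpace Mh] (φh : Flow ℝ Mh) (x : Mh) (a b ε : ℝ)
    (hε : 0 < ε) :
    ∃ δ > 0, ∀ s ∈ Icc a b, ∀ z : Mh, dist z x < δ → dist (φh s z) (φh s x) < ε := by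
  have key : ∀ s : ℝ, ∃ ρ > 0, ∀ s' (z : Mh), dist s' s < ρ → dist z x < ρ →
      dist (φh s' z) (φh s' x) < ε := by
    intro s
    have hg : Continuous fun p : ℝ × Mh => dist (φh p.1 p.2) (φh p.1 x) := by fun_prop
    have h0 : Filter.Tendsto (fun p : ℝ × Mh => dist (φh p.1 p.2) (φh p.1 x)) (nhds (s, x))
        (nhds 0) := by
      have := hg.continuousAt (x := (s, x)); simpa [ContinuousAt] using this
    have hev := h0.eventually (gt_mem_nhds hε)
    rw [Metric.eventually_nhds_iff] at hev
    obtain ⟨ρ, hρ, h⟩ := hev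
    exact ⟨ρ, hρ, fun s' z h1 h2 => h (y := (s', z)) (by rw [Prod.dist_eq]; exact max_lt h1 h2)⟩
  choose ρ hρpos hρ using key
  obtain ⟨F, -, hF⟩ := (isCompact_Icc (a := a) (b := b)).elim_nhds_subcover
    (fun s => Metric.ball s (ρ s)) (fun s _ => Metric.ball_mem_nhds s (hρpos s))
  rcases F.eq_empty_or_nonempty with hFe | hFn
  · exact ⟨1, one_pos, fun s hs z _ => absurd (hF hs) (by simp [hFe])⟩
  · refine ⟨F.inf' hFn ρ, ?_, fun s hs z hz => ?_⟩
    · exact (Finset.lt_inf'_iff hFn).mpr fun i _ => hρpos i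
    · obtain ⟨i, hi, hsi⟩ := by simpa using hF hs
      exact hρ i s z hsi (lt_of_lt_of_le hz (Finset.inf'_le _ hi))

/-- A compact subset of the covering space meeting every deck orbit. -/
theorem QL.compactBase {M Mh : Type*} [MetricSpace M] [CompactSpace M] [MetricSpace Mh]
    (π : Mh → M) (hcov : IsCoveringMap π)
    (σ : Equiv.Perm Mh)
    (hdeck : ∀ xh yh : Mh, π xh = π yh → ∃ k : ℤ, (σ ^ k) xh = yh) :
    ∃ K : Set Mh, IsCompact K ∧ ∀ xh : Mh, ∃ k : ℤ, (σ ^ k) xh ∈ K := by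
  have hclosed : IsClosed (Set.range π) := by
    rw [← isOpen_compl_iff, isOpen_iff_mem_nhds]
    intro p hp
    obtain ⟨hd, U, hpU, hU, hfU, H, hH⟩ := hcov p
    refine Filter.mem_of_superset (hU.mem_nhds hpU) ?_
    intro q hq
    rintro ⟨z, rfl⟩
    have h2 := (H ⟨z, hq⟩).2.2
    exact hp ⟨((H ⟨z, hq⟩).2 : π ⁻¹' {p}), h2⟩
  have hrc : IsCompact (Set.range π) := hclosed.isCompact
  have hsec : ∀ p : M, ∃ S : Set Mh, IsCompact S ∧ (p ∈ Set.range π → π '' S ∈ nhds p) := by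
    intro p
    by_cases hp : p ∈ Set.range π
    · obtain ⟨z, rfl⟩ := hp
      haveI : Nonempty (π ⁻¹' {π z}) := ⟨⟨z, rfl⟩⟩
      obtain ⟨hd, e, hpe⟩ : DiscreteTopology (π ⁻¹' {π z}) ∧
          ∃ e : Bundle.Trivialization (π ⁻¹' {π z}) π, π z ∈ e.baseSet :=
        ⟨(hcov (π z)).discreteTopology_fiber, _, (hcov (π z)).mem_toTrivialization_baseSet⟩
      obtain ⟨N, hNnhds, hNsub, hNcomp⟩ :=
        local_compact_nhds (e.open_baseSet.mem_nhds hpe)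
      have hz : z ∈ e.source := e.mem_source.mpr hpe
      set i₀ : π ⁻¹' {π z} := (e z).2 with hi₀
      refine ⟨(fun q => e.toOpenPartialHomeomorph.symm (q, i₀)) '' N, ?_, fun _ => ?_⟩
      · apply hNcomp.image_of_continuousOn
        apply (e.toOpenPartialHomeomorph.continuousOn_symm.comp
          (Continuous.continuousOn (by fun_prop)) ?_)
        intro q hq
        rw [e.target_eq]
        exact ⟨hNsub hq, trivial⟩
      · refine Filter.mem_of_superset hNnhds ?_
        intro q hq
        refine ⟨e.toOpenPartialHomeomorph.symm (q, i₀), ⟨q, hq, rfl⟩, ?_⟩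
        exact e.proj_symm_apply (e.mem_target.mpr (hNsub hq))
    · exact ⟨∅, isCompact_empty, fun h => absurd h hp⟩
  choose S hScomp hSnhds using hsec
  obtain ⟨F, hFmem, hFcov⟩ := hrc.elim_nhds_subcover (fun p => π '' S p)
    (fun p hp => hSnhds p hp)
  refine ⟨⋃ p ∈ F, S p, F.isCompact_biUnion (fun p _ => hScomp p), fun xh => ?_⟩
  have hmem : π xh ∈ ⋃ p ∈ F, π '' S p := hFcov ⟨xh, rfl⟩
  simp only [Set.mem_iUnion] at hmem
  obtain ⟨p, hpF, w, hwS, hwπ⟩ := hmem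
  obtain ⟨k, hk⟩ := hdeck xh w hwπ.symm
  refine ⟨k, ?_⟩
  rw [hk]
  exact Set.mem_iUnion₂.mpr ⟨p, hpF, hwS⟩

theorem QL.perm_apply_inv_self {α : Type*} (σ : Equiv.Perm α) (x : α) : σ (σ⁻¹ x) = x :=
  (Equiv.eq_symm_apply σ).mp rfl

theorem QL.perm_inv_apply_self {α : Type*} (σ : Equiv.Perm α) (x : α) : σ⁻¹ (σ x) = x :=
  Equiv.Perm.inv_eq_iff_eq.mpr rfl

theorem QL.fzpow {Mh : Type*} [MetricSpace Mh] (σ : Equiv.Perm Mh) (f : Mh → ℝ) (c : ℤ)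
    (heq : ∀ xh, f (σ xh) = f xh + c) (k : ℤ) (xh : Mh) :
    f ((σ ^ k) xh) = f xh + k * c := by
  have hinv : ∀ z, f (σ⁻¹ z) = f z - c := by
    intro z
    have := heq (σ⁻¹ z)
    rw [QL.perm_apply_inv_self] at this
    linarith
  revert xh
  induction k using Int.induction_on with
  | zero => simp
  | succ n ih =>
      intro xh
      rw [zpow_add_one, Equiv.Perm.mul_apply, ih (σ xh), heq]; push_cast; ring
  | pred n ih =>
      intro xh
      rw [zpow_sub_one, Equiv.Perm.mul_apply, ih (σ⁻¹ xh), hinv]; push_cast; ring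

theorem QL.flowzpow {Mh : Type*} [MetricSpace Mh] (φh : Flow ℝ Mh) (σ : Equiv.Perm Mh)
    (hσφ : ∀ (t : ℝ) (xh : Mh), φh t (σ xh) = σ (φh t xh)) (k : ℤ) (t : ℝ) (xh : Mh) :
    φh t ((σ ^ k) xh) = (σ ^ k) (φh t xh) := by
  have hinv : ∀ t z, φh t (σ⁻¹ z) = σ⁻¹ (φh t z) := by
    intro t z
    have := hσφ t (σ⁻¹ z)
    rw [QL.perm_apply_inv_self] at this
    rw [this, QL.perm_inv_apply_self]
  revert xh
  induction k using Int.induction_on with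
  | zero => simp
  | succ n ih =>
      intro xh
      rw [zpow_add_one]; simp only [Equiv.Perm.mul_apply]; rw [ih (σ xh), hσφ]
  | pred n ih =>
      intro xh
      rw [zpow_sub_one]; simp only [Equiv.Perm.mul_apply]; rw [ih (σ⁻¹ xh), hinv]

theorem QL.isozpow {Mh : Type*} [MetricSpace Mh] (σ : Equiv.Perm Mh) (hiso : Isometry ⇑σ)
    (k : ℤ) : Isometry ⇑(σ ^ k) := by
  have hinv : Isometry ⇑σ⁻¹ := fun a b => by
    conv_rhs => rw [← QL.perm_apply_inv_self σ a, ← QL.perm_apply_inv_self σ b]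
    exact (hiso _ _).symm
  induction k using Int.induction_on with
  | zero => simpa using isometry_id
  | succ n ih =>
      have h1 : (σ ^ ((n : ℤ) + 1)) = σ ^ (n : ℤ) * σ := by rw [zpow_add_one]
      rw [h1]
      have h2 : ⇑(σ ^ (n : ℤ) * σ) = ⇑(σ ^ (n:ℤ)) ∘ ⇑σ := by ext z; simp [Equiv.Perm.mul_apply]
      rw [h2]; exact ih.comp hiso
  | pred n ih =>
      have h1 : (σ ^ (-(n : ℤ) - 1)) = σ ^ (-(n : ℤ)) * σ⁻¹ := by rw [zpow_sub_one]
      rw [h1]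
      have h2 : ⇑(σ ^ (-(n : ℤ)) * σ⁻¹) = ⇑(σ ^ (-(n:ℤ))) ∘ ⇑σ⁻¹ := by
        ext z; simp [Equiv.Perm.mul_apply]
      rw [h2]; exact ih.comp hinv

theorem QL.slabCompact {Mh : Type*} [MetricSpace Mh]
    (σ : Equiv.Perm Mh) (f : Mh → ℝ) (hf : Continuous f) (c : ℤ) (hc : c ≠ 0)
    (heqz : ∀ (k : ℤ) (xh : Mh), f ((σ ^ k) xh) = f xh + k * c)
    (isoz : ∀ k : ℤ, Isometry ⇑(σ ^ k))
    (K : Set Mh) (hK : IsCompact K) (hKall : ∀ xh : Mh, ∃ k : ℤ, (σ ^ k) xh ∈ K)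
    (a b : ℝ) : IsCompact (f ⁻¹' Icc a b) := by
  rcases isEmpty_or_nonempty Mh with hMh | hMh
  · rw [Set.eq_empty_of_isEmpty (f ⁻¹' Icc a b)]; exact isCompact_empty
  have hKbddB : BddBelow (f '' K) := (hK.image hf).bddBelow
  have hKbddA : BddAbove (f '' K) := (hK.image hf).bddAbove
  set A := sInf (f '' K)
  set B := sSup (f '' K)
  set R : ℝ := |A| + |B| + |a| + |b| with hRdef
  set N : ℤ := ⌈R⌉ with hNdef
  apply IsCompact.of_isClosed_subset
    ((Finset.Icc (-N) N).isCompact_biUnion (fun j _ => hK.image (isoz j).continuous))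
    (isClosed_Icc.preimage hf)
  intro xh hxh
  obtain ⟨k, hk⟩ := hKall xh
  have hmem : f ((σ ^ k) xh) ∈ f '' K := ⟨_, hk, rfl⟩
  have h1 : A ≤ f xh + k * c := by rw [← heqz k xh]; exact csInf_le hKbddB hmem
  have h2 : f xh + k * c ≤ B := by rw [← heqz k xh]; exact le_csSup hKbddA hmem
  have hfa : a ≤ f xh := hxh.1
  have hfb : f xh ≤ b := hxh.2
  have hcabs : (1 : ℝ) ≤ |(c : ℝ)| := by
    have h3 : (1 : ℤ) ≤ |c| := Int.one_le_abs hc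
    calc (1:ℝ) ≤ ((|c| : ℤ) : ℝ) := by exact_mod_cast h3
    _ = |(c:ℝ)| := by push_cast; rfl
  have hkR : |(k : ℝ)| ≤ R := by
    have h3 : |(k : ℝ) * c| ≤ R := by
      rw [abs_le, hRdef]
      constructor <;>
        linarith [abs_nonneg A, abs_nonneg B, abs_nonneg a, abs_nonneg b,
          le_abs_self A, le_abs_self B, le_abs_self a, le_abs_self b,
          neg_abs_le A, neg_abs_le B, neg_abs_le a, neg_abs_le b]
    calc |(k:ℝ)| = |(k:ℝ)| * 1 := by ring
    _ ≤ |(k:ℝ)| * |(c:ℝ)| := by gcongr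
    _ = |(k:ℝ) * c| := (abs_mul _ _).symm
    _ ≤ R := h3
  have hkN : -N ≤ -k ∧ -k ≤ N := by
    have h4 : |k| ≤ N := by
      have h5 : ((|k| : ℤ) : ℝ) ≤ (N : ℝ) := by
        calc ((|k| : ℤ) : ℝ) = |(k:ℝ)| := by push_cast; rfl
        _ ≤ R := hkR
        _ ≤ N := Int.le_ceil R
      exact_mod_cast h5
    rw [abs_le] at h4; omega
  refine Set.mem_biUnion (Finset.mem_Icc.mpr hkN) ⟨(σ ^ k) xh, hk, ?_⟩
  rw [← Equiv.Perm.mul_apply, ← zpow_add, neg_add_cancel, zpow_zero, Equiv.Perm.one_apply]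

theorem QL.shiftLemma (c : ℤ) (hc : c ≠ 0) (r : ℝ) :
    ∃ k : ℤ, 0 ≤ r + k * c ∧ r + k * c < |(c : ℝ)| := by
  set m : ℝ := |(c : ℝ)| with hm
  have hcr : ((c : ℝ)) ≠ 0 := Int.cast_ne_zero.mpr hc
  have hmpos : 0 < m := abs_pos.mpr hcr
  refine ⟨(if 0 < c then -1 else 1) * ⌊r / m⌋, ?_, ?_⟩ <;>
  · have hkc : (((if 0 < c then -1 else 1) * ⌊r / m⌋ : ℤ) : ℝ) * c = -(⌊r / m⌋ * m) := by
      rcases lt_trichotomy c 0 with h | h | h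
      · have hmne : m = -(c : ℝ) := by
          rw [hm, abs_of_neg (by exact_mod_cast h)]
        rw [if_neg (by omega), hmne]; push_cast; ring
      · exact absurd h hc
      · have hmpo : m = (c : ℝ) := by
          rw [hm, abs_of_pos (by exact_mod_cast h)]
        rw [if_pos h, hmpo]; push_cast; ring
    rw [hkc]
    first
    | simpa using Int.sub_floor_div_mul_nonneg r hmpos
    | (have := Int.sub_floor_div_mul_lt r hmpos; linarith)

theorem QL.ucLemma {Mh : Type*} [MetricSpace Mh]
    (σ : Equiv.Perm Mh) (f : Mh → ℝ) (hf : Continuous f) (c : ℤ) (hc : c ≠ 0)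
    (heqz : ∀ (k : ℤ) (xh : Mh), f ((σ ^ k) xh) = f xh + k * c)
    (isoz : ∀ k : ℤ, Isometry ⇑(σ ^ k))
    (hslab : ∀ a b : ℝ, IsCompact (f ⁻¹' Icc a b)) :
    ∃ δ > 0, ∀ z w : Mh, dist z w < δ → |f z - f w| < 1 := by
  by_contra hcon
  push_neg at hcon
  have h : ∀ n : ℕ, ∃ z w : Mh, dist z w < 1 / (n + 1) ∧ 1 ≤ |f z - f w| := by
    intro n
    obtain ⟨z, w, h1, h2⟩ := hcon (1 / (n + 1)) (by positivity)
    exact ⟨z, w, h1, h2⟩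
  choose z w hdist hsep using h
  have hk : ∀ n, ∃ k : ℤ, 0 ≤ f (z n) + k * c ∧ f (z n) + k * c < |(c : ℝ)| :=
    fun n => QL.shiftLemma c hc (f (z n))
  choose k hk0 hk1 using hk
  set z' : ℕ → Mh := fun n => (σ ^ k n) (z n) with hz'
  set w' : ℕ → Mh := fun n => (σ ^ k n) (w n) with hw'
  have hz'mem : ∀ n, z' n ∈ f ⁻¹' Icc 0 |(c : ℝ)| := by
    intro n
    simp only [Set.mem_preimage, Set.mem_Icc, hz', heqz]
    exact ⟨hk0 n, (hk1 n).le⟩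
  obtain ⟨p, hp, ψ, hψ, hconv⟩ := (hslab 0 |(c : ℝ)|).tendsto_subseq hz'mem
  have hd : ∀ n, dist (z' n) (w' n) < 1 / (n + 1) := by
    intro n
    rw [hz', hw', (isoz (k n)).dist_eq]
    exact hdist n
  have hwconv : Tendsto (fun n => w' (ψ n)) atTop (𝓝 p) := by
    rw [tendsto_iff_dist_tendsto_zero]
    apply squeeze_zero (fun n => dist_nonneg)
      (fun n => (dist_triangle (w' (ψ n)) (z' (ψ n)) p).trans
        (add_le_add ((dist_comm (w' (ψ n)) (z' (ψ n))) ▸ (hd (ψ n)).le) le_rfl))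
    have h1 : Tendsto (fun n : ℕ => 1 / ((ψ n : ℝ) + 1)) atTop (𝓝 0) := by
      have h2 : Tendsto (fun n : ℕ => 1 / ((n : ℝ) + 1)) atTop (𝓝 0) :=
        tendsto_one_div_add_atTop_nhds_zero_nat
      exact h2.comp hψ.tendsto_atTop
    have h2 : Tendsto (fun n => dist (z' (ψ n)) p) atTop (𝓝 0) :=
      tendsto_iff_dist_tendsto_zero.mp hconv
    simpa using h1.add h2
  have hfz : Tendsto (fun n => f (z' (ψ n))) atTop (𝓝 (f p)) :=
    (hf.tendsto p).comp hconv
  have hfw : Tendsto (fun n => f (w' (ψ n))) atTop (𝓝 (f p)) :=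
    (hf.tendsto p).comp hwconv
  have habs : Tendsto (fun n => |f (z' (ψ n)) - f (w' (ψ n))|) atTop (𝓝 0) := by
    have := (hfz.sub hfw).abs
    simpa using this
  obtain ⟨n, hn⟩ := (habs.eventually (gt_mem_nhds one_pos)).exists
  have hge : 1 ≤ |f (z' (ψ n)) - f (w' (ψ n))| := by
    rw [hz', hw']
    simp only [heqz]
    calc (1:ℝ) ≤ |f (z (ψ n)) - f (w (ψ n))| := hsep (ψ n)
    _ = |f (z (ψ n)) + (k (ψ n)) * c - (f (w (ψ n)) + (k (ψ n)) * c)| := by ring_nf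
  linarith
theorem QL.truncation {Mh : Type*} [MetricSpace Mh] (φh : Flow ℝ Mh) (T : ℝ) (hT : 0 < T)
    (f : Mh → ℝ) (m : ℝ) (hm : 1 ≤ m)
    (hdec : ∀ (z : Mh) (t : ℝ), T ≤ t → f (φh t z) ≤ f z)
    (δ₁ : ℝ) (hδ₁ : ∀ z w : Mh, dist z w < δ₁ → |f z - f w| < 1)
    (ε' : ℝ) (hε' : ε' ≤ δ₁)
    (γ : PreChain Mh) (hγ : γ.IsChain φh T ε')
    (hQ0a : 0 ≤ f (φh (γ.t 0) (γ.x 0))) (hQ0b : f (φh (γ.t 0) (γ.x 0)) < m)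
    (hlast : 2*m+1 ≤ f (γ.lastPoint φh)) :
    ∃ τ : PreChain Mh, τ.IsChain φh T ε' ∧ 1 ≤ τ.n ∧
      τ.t 0 ≤ 2*T ∧ τ.t (Fin.last τ.n) ≤ 2*T ∧
      m ≤ f τ.first ∧ f τ.first ≤ m+1 ∧
      2*m+1 ≤ f (τ.lastPoint φh) ∧ f (τ.lastPoint φh) ≤ 2*m+2 := by
  classical
  obtain ⟨htime, hjump⟩ := hγ
  set n := γ.n with hn
  -- ℕ-indexed values
  set Q : ℕ → ℝ := fun i => if h : i ≤ n then f (φh (γ.t ⟨i, by omega⟩) (γ.x ⟨i, by omega⟩)) else 0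
    with hQ
  set Fx : ℕ → ℝ := fun i => if h : i ≤ n then f (γ.x ⟨i, by omega⟩) else 0 with hFx
  have hQdef : ∀ (i : ℕ) (h : i ≤ n), Q i = f (φh (γ.t ⟨i, by omega⟩) (γ.x ⟨i, by omega⟩)) := by
    intro i h; rw [hQ]; simp [h]
  have hFdef : ∀ (i : ℕ) (h : i ≤ n), Fx i = f (γ.x ⟨i, by omega⟩) := by
    intro i h; rw [hFx]; simp [h]
  have hQF : ∀ (i : ℕ), i ≤ n → Q i ≤ Fx i := by
    intro i h
    rw [hQdef i h, hFdef i h]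
    exact hdec _ _ (htime _)
  have hjump' : ∀ (i : ℕ), i < n → Fx (i+1) < Q i + 1 := by
    intro i h
    rw [hQdef i (by omega), hFdef (i+1) (by omega)]
    have h2 := hjump ⟨i, h⟩
    have hcs : (⟨i, h⟩ : Fin n).castSucc = (⟨i, by omega⟩ : Fin (n+1)) := rfl
    have hsc : (⟨i, h⟩ : Fin n).succ = (⟨i+1, by omega⟩ : Fin (n+1)) := rfl
    rw [hcs, hsc] at h2
    have := hδ₁ _ _ (lt_of_lt_of_le h2 hε')
    rw [abs_lt] at this
    linarith [this.1, this.2]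
  have hQ0 : 0 ≤ Q 0 ∧ Q 0 < m := by
    have h0 : (0 : Fin (n+1)) = ⟨0, by omega⟩ := rfl
    rw [hQdef 0 (by omega)]
    rw [h0] at hQ0a hQ0b
    exact ⟨hQ0a, hQ0b⟩
  have hQn : 2*m+1 ≤ Q n := by
    have hl : Fin.last n = (⟨n, by omega⟩ : Fin (n+1)) := rfl
    rw [hQdef n le_rfl]
    unfold PreChain.lastPoint at hlast
    rw [hl] at hlast
    exact hlast
  -- stop index b
  have hbex : ∃ i, i ≤ n ∧ 2*m+1 ≤ Q i := ⟨n, le_rfl, hQn⟩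
  set b := Nat.find hbex with hbdef
  obtain ⟨hbn, hQb⟩ := Nat.find_spec hbex
  rw [← hbdef] at hbn hQb
  have hbmin : ∀ i, i < b → Q i < 2*m+1 := by
    intro i hi
    have h2 := Nat.find_min hbex hi
    push_neg at h2
    by_contra hcon
    push_neg at hcon
    exact absurd (h2 (by omega)) (by push_neg; exact hcon)
  have hb1 : 1 ≤ b := by
    by_contra hcon
    push_neg at hcon
    have hb0 : b = 0 := by omega
    rw [hb0] at hQb
    linarith [hQ0.2]
  have hFb : Fx b < 2*m+2 := by
    have h1 := hjump' (b-1) (by omega)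
    have h2 := hbmin (b-1) (by omega)
    have h3 : b - 1 + 1 = b := by omega
    rw [h3] at h1
    linarith
  -- start index a
  have hP0 : Q 0 < m := hQ0.2
  set a := Nat.findGreatest (fun i => Q i < m) (b-1) with hadef
  have haP : Q a < m := by
    have := Nat.findGreatest_spec (P := fun i => Q i < m) (Nat.zero_le (b-1)) hP0
    rwa [← hadef] at this
  have hab : a ≤ b - 1 := Nat.findGreatest_le _
  have hgt : ∀ i, a < i → i ≤ b - 1 → m ≤ Q i := by
    intro i h1 h2
    exact not_lt.mp (by
      simpa using Nat.findGreatest_is_greatest (P := fun i => Q i < m) (by rw [← hadef] at *; omega) h2)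
  set a' := a + 1 with ha'def
  have ha'b : a' ≤ b := by omega
  have hQmid : ∀ i, a' ≤ i → i ≤ b → m ≤ Q i := by
    intro i h1 h2
    rcases eq_or_lt_of_le h2 with rfl | h3
    · linarith
    · exact hgt i (by omega) (by omega)
  have hFa'1 : m ≤ Fx a' := le_trans (hQmid a' le_rfl ha'b) (hQF a' (by omega))
  have hFa'2 : Fx a' < m + 1 := by
    have := hjump' a (by omega)
    linarith
  have ha'bs : a' < b := by
    rcases eq_or_lt_of_le ha'b with h | h
    · exfalso
      have h1 : Q a' ≤ Fx a' := hQF a' (by omega)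
      have h2 := hQb
      rw [← h] at h2
      linarith
    · exact h
  -- construct τ
  set nτ := b - a' with hnτ
  have hnτ1 : 1 ≤ nτ := by omega
  have ha'n : a' ≤ n := by omega
  have ha'lt : a' < n + 1 := by omega
  have hblt : b < n + 1 := by omega
  set ia : Fin (n+1) := ⟨a', ha'lt⟩ with hia
  set ib : Fin (n+1) := ⟨b, hblt⟩ with hib
  set X0 : Mh := if γ.t ia ≤ 2*T then γ.x ia else φh (γ.t ia - T) (γ.x ia) with hX0
  set xf : Fin (nτ+1) → Mh :=
    fun i => if i.val = 0 then X0 else γ.x ⟨a' + i.val, by omega⟩ with hxf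
  set tf : Fin (nτ+1) → ℝ :=
    fun i => if i.val = 0 then (if γ.t ia ≤ 2*T then γ.t ia else T)
      else if i.val = nτ then (if γ.t ib ≤ 2*T then γ.t ib else T)
      else γ.t ⟨a' + i.val, by omega⟩ with htf
  -- eval helpers
  have hxeq : ∀ (i j : Fin (n+1)), i.val = j.val → γ.x i = γ.x j :=
    fun i j h => congrArg γ.x (Fin.ext h)
  have hteq : ∀ (i j : Fin (n+1)), i.val = j.val → γ.t i = γ.t j :=
    fun i j h => congrArg γ.t (Fin.ext h)
  have hxf0 : ∀ i : Fin (nτ+1), i.val = 0 → xf i = X0 := by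
    intro i hi; rw [hxf]; simp only [hi]; simp
  have hxfp : ∀ (i : Fin (nτ+1)) (h : i.val ≠ 0), xf i = γ.x ⟨a' + i.val, by omega⟩ := by
    intro i hi; rw [hxf]; simp only [if_neg hi]
  have htf0 : ∀ i : Fin (nτ+1), i.val = 0 →
      tf i = (if γ.t ia ≤ 2*T then γ.t ia else T) := by
    intro i hi; rw [htf]; simp only [hi]; simp
  have htfl : ∀ i : Fin (nτ+1), i.val = nτ →
      tf i = (if γ.t ib ≤ 2*T then γ.t ib else T) := by
    intro i hi; rw [htf]; simp only [hi, if_neg (by omega : ¬ nτ = 0)]; simp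
  have htfm : ∀ (i : Fin (nτ+1)) (h1 : i.val ≠ 0) (h2 : i.val ≠ nτ),
      tf i = γ.t ⟨a' + i.val, by omega⟩ := by
    intro i h1 h2; rw [htf]; simp only [if_neg h1, if_neg h2]
  -- original jumps, ℕ-indexed
  have horig : ∀ (j : ℕ) (h : j < n),
      dist (φh (γ.t ⟨j, by omega⟩) (γ.x ⟨j, by omega⟩)) (γ.x ⟨j+1, by omega⟩) < ε' := by
    intro j h
    exact hjump ⟨j, h⟩
  -- endpoint of segment 0 of τ equals q_{a'}
  have hseg0 : φh (tf ⟨0, by omega⟩) (xf ⟨0, by omega⟩) = φh (γ.t ia) (γ.x ia) := by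
    rw [hxf0 _ rfl, htf0 _ rfl, hX0]
    by_cases hcase : γ.t ia ≤ 2*T
    · rw [if_pos hcase, if_pos hcase]
    · rw [if_neg hcase, if_neg hcase, ← Flow.map_add]
      congr 1
      ring
  -- τ and its properties
  refine ⟨⟨nτ, xf, tf⟩, ⟨?_, ?_⟩, hnτ1, ?_, ?_, ?_, ?_, ?_, ?_⟩
  · -- times ≥ T
    intro i
    show T ≤ tf i
    rw [htf]
    dsimp only
    split
    · split
      · exact htime ia
      · exact le_rfl
    · split
      · split
        · exact htime ib
        · exact le_rfl
      · exact htime _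
  · -- jumps
    intro i
    show dist (φh (tf i.castSucc) (xf i.castSucc)) (xf i.succ) < ε'
    have hilt : (i : ℕ) < nτ := i.isLt
    have hcsv : (i.castSucc).val = i.val := Fin.coe_castSucc i
    have hscv : (i.succ).val = i.val + 1 := Fin.val_succ i
    have hsle : (i.succ).val ≤ nτ := by omega
    have hcslt : (i.castSucc).val < nτ := by omega
    have hsucne : (i.succ).val ≠ 0 := by omega
    have hxsucc : xf i.succ = γ.x ⟨a' + i.val + 1, by omega⟩ := by
      rw [hxfp _ hsucne]
      exact hxeq _ _ (by simp [hscv]; omega)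
    rw [hxsucc]
    by_cases hi0 : i.val = 0
    · have hcs0 : (i.castSucc).val = 0 := by omega
      have : φh (tf i.castSucc) (xf i.castSucc) = φh (γ.t ia) (γ.x ia) := by
        rw [show i.castSucc = (⟨0, by omega⟩ : Fin (nτ+1)) from Fin.ext hcs0]
        exact hseg0
      rw [this]
      have hidx : (⟨a' + i.val + 1, by omega⟩ : Fin (n+1)) = (⟨a' + 1, by omega⟩ : Fin (n+1)) :=
        Fin.ext (by simp [hi0])
      rw [hidx]
      exact horig a' (by omega)
    · have hcsne : (i.castSucc).val ≠ 0 := by omega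
      have hcsnl : (i.castSucc).val ≠ nτ := by
        have := i.isLt; omega
      rw [htfm _ hcsne hcsnl, hxfp _ hcsne]
      have := horig (a' + i.val) (by have := i.isLt; omega)
      convert this using 4 <;> exact Fin.ext (by simp)
  · -- t 0 ≤ 2T
    show tf 0 ≤ 2*T
    rw [htf0 0 rfl]
    split
    · assumption
    · linarith
  · -- t last ≤ 2T
    show tf (Fin.last nτ) ≤ 2*T
    rw [htfl _ (Fin.val_last nτ)]
    split
    · assumption
    · linarith
  · -- m ≤ f first
    show m ≤ f (xf 0)
    rw [hxf0 0 rfl, hX0]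
    split
    · rw [hFdef a' ha'n] at hFa'1
      convert hFa'1 using 3
    · rename_i hcase
      push_neg at hcase
      have hQa' : m ≤ Q a' := hQmid a' le_rfl ha'b
      rw [hQdef a' ha'n] at hQa'
      have hflow : φh (γ.t ia) (γ.x ia) = φh T (φh (γ.t ia - T) (γ.x ia)) := by
        rw [← Flow.map_add]; congr 1; ring
      have h2 : f (φh T (φh (γ.t ia - T) (γ.x ia))) ≤ f (φh (γ.t ia - T) (γ.x ia)) :=
        hdec _ _ le_rfl
      rw [← hflow] at h2
      have h3 : γ.t ia = γ.t ⟨a', by omega⟩ := hteq _ _ rfl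
      have h4 : γ.x ia = γ.x ⟨a', by omega⟩ := hxeq _ _ rfl
      rw [h3, h4] at h2 ⊢
      linarith
  · -- f first ≤ m + 1
    show f (xf 0) ≤ m + 1
    rw [hxf0 0 rfl, hX0]
    split
    · rw [hFdef a' ha'n] at hFa'2
      have : f (γ.x ia) = f (γ.x ⟨a', by omega⟩) := congrArg f (hxeq _ _ rfl)
      rw [this]
      linarith
    · rename_i hcase
      push_neg at hcase
      have h2 : f (φh (γ.t ia - T) (γ.x ia)) ≤ f (γ.x ia) := hdec _ _ (by linarith [htime ia])
      rw [hFdef a' ha'n] at hFa'2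
      have : f (γ.x ia) = f (γ.x ⟨a', by omega⟩) := congrArg f (hxeq _ _ rfl)
      linarith [h2, this ▸ hFa'2]
  · -- 2m+1 ≤ f lastPoint
    show 2*m+1 ≤ f (φh (tf (Fin.last nτ)) (xf (Fin.last nτ)))
    have hxl : xf (Fin.last nτ) = γ.x ib := by
      rw [hxfp _ (by simp only [Fin.val_last]; omega)]
      exact hxeq _ _ (by simp only [Fin.val_mk, Fin.val_last, hib]; omega)
    rw [hxl, htfl _ (Fin.val_last nτ)]
    have hQb' : 2*m+1 ≤ f (φh (γ.t ib) (γ.x ib)) := by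
      rw [hQdef b hbn] at hQb
      have h3 : γ.t ib = γ.t ⟨b, by omega⟩ := hteq _ _ rfl
      have h4 : γ.x ib = γ.x ⟨b, by omega⟩ := hxeq _ _ rfl
      rw [h3, h4]
      exact hQb
    split
    · exact hQb'
    · rename_i hcase
      push_neg at hcase
      have hflow : φh (γ.t ib) (γ.x ib) = φh (γ.t ib - T) (φh T (γ.x ib)) := by
        rw [← Flow.map_add]; congr 1; ring
      have h2 : f (φh (γ.t ib - T) (φh T (γ.x ib))) ≤ f (φh T (γ.x ib)) :=
        hdec _ _ (by linarith)
      rw [← hflow] at h2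
      linarith
  · -- f lastPoint ≤ 2m+2
    show f (φh (tf (Fin.last nτ)) (xf (Fin.last nτ))) ≤ 2*m+2
    have hxl : xf (Fin.last nτ) = γ.x ib := by
      rw [hxfp _ (by simp only [Fin.val_last]; omega)]
      exact hxeq _ _ (by simp only [Fin.val_mk, Fin.val_last, hib]; omega)
    rw [hxl, htfl _ (Fin.val_last nτ)]
    have hFb' : f (γ.x ib) < 2*m+2 := by
      rw [hFdef b hbn] at hFb
      have h4 : γ.x ib = γ.x ⟨b, by omega⟩ := hxeq _ _ rfl
      rw [h4]
      exact hFb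
    split
    · rename_i hcase
      have h2 : f (φh (γ.t ib) (γ.x ib)) ≤ f (γ.x ib) := hdec _ _ (htime ib)
      linarith
    · have h2 : f (φh T (γ.x ib)) ≤ f (γ.x ib) := hdec _ _ le_rfl
      linarith

end QLAux

section Main

open Set Filter Topology

/- The ℤ-covering `M̂_α → M` associated to a nonzero integral class `α` is axiomatized:
`π : Mh → M` is a covering map, `σ` generates the deck group (acting isometrically,
commuting with the lifted flow `φh`, and transitively on fibers), and `c = α(σ) ∈ ℤ`
is the nonzero value of `α` on the generator, so that `α`-equivariance of `f` reads
`f (σ x) = f x + c`. -/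

/-- If there exists an `α`-equivariant pre-Lyapunov map
`f : M̂_α → ℝ`, then `α` is quasi-Lyapunov: there exist `C ≥ 0` and `ε > 0` such that
every `(ε,T)`-pseudo-orbit of the lifted flow from `x` to `y` satisfies
`f x ≥ f y - C`. -/
theorem quasiLyapunov_of_preLyapunov
    {M Mh : Type*} [MetricSpace M] [CompactSpace M] [MetricSpace Mh]
    (φ : Flow ℝ M) (φh : Flow ℝ Mh) (π : Mh → M) (hcov : IsCoveringMap π)
    (hπφ : ∀ (t : ℝ) (xh : Mh), π (φh t xh) = φ t (π xh))
    (σ : Equiv.Perm Mh) (hiso : Isometry σ)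
    (hπσ : ∀ xh, π (σ xh) = π xh)
    (hσφ : ∀ (t : ℝ) (xh : Mh), φh t (σ xh) = σ (φh t xh))
    (hdeck : ∀ xh yh : Mh, π xh = π yh → ∃ k : ℤ, (σ ^ k) xh = yh)
    (c : ℤ) (hc : c ≠ 0)
    (T : ℝ) (hT : 0 < T)
    (f : Mh → ℝ) (hf : Continuous f)
    (heq : ∀ xh, f (σ xh) = f xh + c)
    (hpre : ∀ x y : Mh, ChainTo φh T x y → f y ≤ f x) :
    ∃ C ≥ (0 : ℝ), ∃ ε > 0, ∀ γ : PreChain Mh, γ.IsChain φh T ε →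
      f (γ.lastPoint φh) - C ≤ f γ.first := by
  classical
  rcases isEmpty_or_nonempty Mh with hMh | hMh
  · exact ⟨0, le_rfl, 1, one_pos, fun γ _ => (IsEmpty.false (γ.x 0)).elim⟩
  have isoz : ∀ k : ℤ, Isometry ⇑(σ ^ k) := QL.isozpow σ hiso
  have heqz : ∀ (k : ℤ) (xh : Mh), f ((σ ^ k) xh) = f xh + k * c := QL.fzpow σ f c heq
  have hflowz : ∀ (k : ℤ) (t : ℝ) (xh : Mh), φh t ((σ ^ k) xh) = (σ ^ k) (φh t xh) :=
    QL.flowzpow φh σ hσφ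
  obtain ⟨K0, hK0c, hK0all⟩ := QL.compactBase π hcov σ hdeck
  have hslab : ∀ a b : ℝ, IsCompact (f ⁻¹' Icc a b) :=
    QL.slabCompact σ f hf c hc heqz isoz K0 hK0c hK0all
  obtain ⟨δ₁, hδ₁pos, hδ₁⟩ := QL.ucLemma σ f hf c hc heqz isoz hslab
  -- f decreases along flow segments of length ≥ T
  have hdec : ∀ (z : Mh) (t : ℝ), T ≤ t → f (φh t z) ≤ f z := by
    intro z t ht
    apply hpre
    intro ε hε
    exact ⟨⟨0, fun _ => z, fun _ => t⟩, ⟨fun _ => ht, fun i => i.elim0⟩, rfl, rfl⟩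
  set m : ℝ := |(c : ℝ)| with hmdef
  have hm1 : (1 : ℝ) ≤ m := by
    have h3 : (1 : ℤ) ≤ |c| := Int.one_le_abs hc
    rw [hmdef]
    calc (1:ℝ) ≤ ((|c| : ℤ) : ℝ) := by exact_mod_cast h3
    _ = |(c:ℝ)| := by push_cast; rfl
  by_contra hcon
  push_neg at hcon
  -- a sequence of ever finer chains climbing by more than 3m+2, truncated
  have hbad : ∀ nn : ℕ, ∃ τ : PreChain Mh, τ.IsChain φh T (min δ₁ (1/(nn+1))) ∧ 1 ≤ τ.n ∧
      τ.t 0 ≤ 2*T ∧ τ.t (Fin.last τ.n) ≤ 2*T ∧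
      m ≤ f τ.first ∧ f τ.first ≤ m+1 ∧
      2*m+1 ≤ f (τ.lastPoint φh) ∧ f (τ.lastPoint φh) ≤ 2*m+2 := by
    intro nn
    set ε' : ℝ := min δ₁ (1/(nn+1)) with hε'def
    have hε'pos : 0 < ε' := lt_min hδ₁pos (by positivity)
    obtain ⟨γ, hγc, hγinc⟩ := hcon (3*m+2) (by linarith) ε' hε'pos
    obtain ⟨k, hk0, hk1⟩ := QL.shiftLemma c hc (f (φh (γ.t 0) (γ.x 0)))
    set γ' : PreChain Mh := ⟨γ.n, fun i => (σ^k) (γ.x i), γ.t⟩ with hγ'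
    have hγ'c : γ'.IsChain φh T ε' := by
      refine ⟨hγc.1, fun i => ?_⟩
      show dist (φh (γ.t i.castSucc) ((σ^k) (γ.x i.castSucc))) ((σ^k) (γ.x i.succ)) < ε'
      rw [hflowz, (isoz k).dist_eq]
      exact hγc.2 i
    have hQ0' : f (φh (γ'.t 0) (γ'.x 0)) = f (φh (γ.t 0) (γ.x 0)) + k*c := by
      show f (φh (γ.t 0) ((σ^k) (γ.x 0))) = _
      rw [hflowz, heqz]
    have hfirst' : f γ'.first = f γ.first + k*c := heqz k _
    have hlast' : f (γ'.lastPoint φh) = f (γ.lastPoint φh) + k*c := by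
      show f (φh (γ.t (Fin.last γ.n)) ((σ^k) (γ.x (Fin.last γ.n)))) = _
      rw [hflowz, heqz]
      rfl
    have hrise : 2*m+1 ≤ f (γ'.lastPoint φh) := by
      have h1 : f (φh (γ'.t 0) (γ'.x 0)) ≤ f γ'.first := hdec _ _ (hγ'c.1 0)
      rw [hQ0'] at h1
      rw [hlast']
      have h2 : f γ.first < f (γ.lastPoint φh) - (3*m+2) := hγinc
      rw [hfirst'] at h1
      linarith
    apply QL.truncation φh T hT f m hm1 hdec δ₁ hδ₁ ε' (min_le_left _ _) γ' hγ'c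
    · rw [hQ0']; exact hk0
    · rw [hQ0']; rw [hmdef]; exact hk1
    · exact hrise
  choose τ hτc hτn hτt0 hτtl hτf1 hτf2 hτl1 hτl2 using hbad
  -- convergent subsequences of endpoints
  have hX : ∀ nn, (τ nn).first ∈ f ⁻¹' Icc m (m+1) := fun nn => ⟨hτf1 nn, hτf2 nn⟩
  obtain ⟨xlim, hxlim, ψ1, hψ1, hxconv1⟩ := (hslab m (m+1)).tendsto_subseq hX
  have hY : ∀ nn, (τ (ψ1 nn)).lastPoint φh ∈ f ⁻¹' Icc (2*m+1) (2*m+2) :=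
    fun nn => ⟨hτl1 _, hτl2 _⟩
  obtain ⟨ylim, hylim, ψ2, hψ2, hyconv⟩ :=
    (hslab (2*m+1) (2*m+2)).tendsto_subseq hY
  set Ψ : ℕ → ℕ := ψ1 ∘ ψ2 with hΨ
  have hΨmono : StrictMono Ψ := hψ1.comp hψ2
  have hxconv : Tendsto (fun nn => (τ (Ψ nn)).first) atTop (𝓝 xlim) :=
    hxconv1.comp hψ2.tendsto_atTop
  -- chain from xlim to ylim
  have hchain : ChainTo φh T xlim ylim := by
    intro ε hε
    obtain ⟨δa, hδa, htubea⟩ := QL.tube φh xlim T (2*T) (ε/3) (by positivity)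
    obtain ⟨δb, hδb, htubeb⟩ := QL.tube φh ylim (-(2*T)) (-T) (ε/3) (by positivity)
    obtain ⟨N0, hN0⟩ := exists_nat_one_div_lt (show (0:ℝ) < ε/3 by positivity)
    have h1 : ∀ᶠ nn in atTop, (τ (Ψ nn)).first ∈ Metric.ball xlim δa :=
      hxconv.eventually (Metric.ball_mem_nhds _ hδa)
    have h2 : ∀ᶠ nn in atTop, (τ (Ψ nn)).lastPoint φh ∈ Metric.ball ylim δb :=
      hyconv.eventually (Metric.ball_mem_nhds _ hδb)
    obtain ⟨nn, ⟨hnn1, hnn2⟩, hnn3⟩ := ((h1.and h2).and (eventually_ge_atTop N0)).exists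
    rw [Metric.mem_ball] at hnn1 hnn2
    -- fineness of the chosen chain
    have hΨge : nn ≤ Ψ nn := hΨmono.id_le nn
    have hfine : min δ₁ (1/((Ψ nn : ℝ)+1)) < ε/3 := by
      have ha2 : (1:ℝ)/((Ψ nn : ℝ)+1) ≤ 1/((N0 : ℝ)+1) := by
        apply one_div_le_one_div_of_le (by positivity)
        have : (N0 : ℝ) ≤ (Ψ nn : ℝ) := by exact_mod_cast le_trans hnn3 hΨge
        linarith
      calc min δ₁ (1/((Ψ nn : ℝ)+1)) ≤ 1/((Ψ nn : ℝ)+1) := min_le_right _ _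
      _ ≤ 1/((N0 : ℝ)+1) := ha2
      _ < ε/3 := hN0
    set τ0 : PreChain Mh := τ (Ψ nn) with hτ0
    have hc0 : τ0.IsChain φh T (min δ₁ (1/((Ψ nn : ℝ)+1))) := by
      have h9 := hτc (Ψ nn)
      convert h9 using 2
    have hn1 : 1 ≤ τ0.n := hτn (Ψ nn)
    set sL : ℝ := τ0.t (Fin.last τ0.n) with hsLdef
    have hsLT : T ≤ sL := hc0.1 _
    have hsL2 : sL ≤ 2*T := hτtl (Ψ nn)
    set xr : Fin (τ0.n + 1) → Mh := fun i =>
      if i.val = 0 then xlim else if i.val = τ0.n then φh (-sL) ylim else τ0.x i with hxr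
    refine ⟨⟨τ0.n, xr, τ0.t⟩, ⟨fun i => hc0.1 i, ?_⟩, ?_, ?_⟩
    · -- jumps
      intro i
      show dist (φh (τ0.t i.castSucc) (xr i.castSucc)) (xr i.succ) < ε
      have hilt : (i:ℕ) < τ0.n := i.isLt
      have hcsv : (i.castSucc).val = (i:ℕ) := Fin.coe_castSucc i
      have hscv : (i.succ).val = (i:ℕ)+1 := Fin.val_succ i
      have horig : dist (φh (τ0.t i.castSucc) (τ0.x i.castSucc)) (τ0.x i.succ) < ε/3 :=
        lt_trans (hc0.2 i) hfine
      -- the last original point is the backward flow of the last point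
      have hlastx : τ0.x (Fin.last τ0.n) = φh (-sL) (τ0.lastPoint φh) := by
        show τ0.x (Fin.last τ0.n) = φh (-sL) (φh sL (τ0.x (Fin.last τ0.n)))
        rw [← Flow.map_add]
        simp
      have hsegb : dist (τ0.x (Fin.last τ0.n)) (φh (-sL) ylim) < ε/3 := by
        rw [hlastx]
        exact htubeb (-sL) ⟨by linarith, by linarith⟩ _ hnn2
      by_cases hi0 : (i:ℕ) = 0
      · have hcs_eq : i.castSucc = (0 : Fin (τ0.n+1)) := Fin.ext (by simp [hcsv, hi0])
        have hxcs : xr i.castSucc = xlim := by rw [hxr]; simp [hcsv, hi0]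
        have hsega : dist (φh (τ0.t i.castSucc) xlim) (φh (τ0.t i.castSucc) (τ0.x i.castSucc))
            < ε/3 := by
          have ht1 : τ0.t i.castSucc ∈ Icc T (2*T) := by
            rw [hcs_eq]
            exact ⟨hc0.1 _, hτt0 (Ψ nn)⟩
          have := htubea (τ0.t i.castSucc) ht1 τ0.first (by
            rw [hτ0] at hnn1 ⊢
            exact hnn1)
          have hfirsteq : τ0.x i.castSucc = τ0.first := by rw [hcs_eq]; rfl
          rw [hfirsteq]
          rw [dist_comm]
          exact this
        rw [hxcs]
        by_cases hi1 : (i:ℕ)+1 = τ0.n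
        · have hsucc_eq : i.succ = Fin.last τ0.n := Fin.ext (by simp [hscv, hi1, Fin.val_last])
          have hxsc : xr i.succ = φh (-sL) ylim := by
            rw [hxr]; simp only [hscv]
            rw [if_neg (by omega), if_pos hi1]
          rw [hxsc]
          calc dist (φh (τ0.t i.castSucc) xlim) (φh (-sL) ylim)
              ≤ dist (φh (τ0.t i.castSucc) xlim) (φh (τ0.t i.castSucc) (τ0.x i.castSucc))
                + dist (φh (τ0.t i.castSucc) (τ0.x i.castSucc)) (τ0.x i.succ)
                + dist (τ0.x i.succ) (φh (-sL) ylim) := dist_triangle4 _ _ _ _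
            _ < ε/3 + ε/3 + ε/3 := by
                have h5 : dist (τ0.x i.succ) (φh (-sL) ylim) < ε/3 := by
                  rw [hsucc_eq]; exact hsegb
                exact add_lt_add (add_lt_add hsega horig) h5
            _ = ε := by ring
        · have hxsc : xr i.succ = τ0.x i.succ := by
            rw [hxr]; simp only [hscv]
            rw [if_neg (by omega), if_neg (by omega)]
          rw [hxsc]
          calc dist (φh (τ0.t i.castSucc) xlim) (τ0.x i.succ)
              ≤ dist (φh (τ0.t i.castSucc) xlim) (φh (τ0.t i.castSucc) (τ0.x i.castSucc))
                + dist (φh (τ0.t i.castSucc) (τ0.x i.castSucc)) (τ0.x i.succ) :=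
              dist_triangle _ _ _
            _ < ε/3 + ε/3 := add_lt_add hsega horig
            _ < ε := by linarith
      · have hxcs : xr i.castSucc = τ0.x i.castSucc := by
          rw [hxr]; simp only [hcsv]
          rw [if_neg hi0, if_neg (by omega)]
        rw [hxcs]
        by_cases hi1 : (i:ℕ)+1 = τ0.n
        · have hsucc_eq : i.succ = Fin.last τ0.n := Fin.ext (by simp [hscv, hi1, Fin.val_last])
          have hxsc : xr i.succ = φh (-sL) ylim := by
            rw [hxr]; simp only [hscv]
            rw [if_neg (by omega), if_pos hi1]
          rw [hxsc]
          calc dist (φh (τ0.t i.castSucc) (τ0.x i.castSucc)) (φh (-sL) ylim)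
              ≤ dist (φh (τ0.t i.castSucc) (τ0.x i.castSucc)) (τ0.x i.succ)
                + dist (τ0.x i.succ) (φh (-sL) ylim) := dist_triangle _ _ _
            _ < ε/3 + ε/3 := by
                have h5 : dist (τ0.x i.succ) (φh (-sL) ylim) < ε/3 := by
                  rw [hsucc_eq]; exact hsegb
                exact add_lt_add horig h5
            _ < ε := by linarith
        · have hxsc : xr i.succ = τ0.x i.succ := by
            rw [hxr]; simp only [hscv]
            rw [if_neg (by omega), if_neg (by omega)]
          rw [hxsc]
          exact lt_trans horig (by linarith)
    · -- first point
      show xr 0 = xlim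
      simp [hxr]
    · -- last point
      show φh (τ0.t (Fin.last τ0.n)) (xr (Fin.last τ0.n)) = ylim
      have hxl : xr (Fin.last τ0.n) = φh (-sL) ylim := by
        rw [hxr]; simp only [Fin.val_last]
        rw [if_neg (by omega)]
        simp
      rw [hxl, ← Flow.map_add]
      rw [← hsLdef, add_neg_cancel]; exact φh.map_zero_apply ylim
  have hle : f ylim ≤ f xlim := hpre _ _ hchain
  have hx2 : f xlim ≤ m + 1 := hxlim.2
  have hy1 : 2*m+1 ≤ f ylim := hylim.1
  linarith

end Main
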